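/- arXiv:2502.06277 — 2 statements merged into one kernel-verified Lean document; each statement's English description precedes it below -/
import Mathlib

section
/- Let G₁ and G₂ be finite simple graphs of orders n₁, n₂ and sizes m₁, m₂, with minimum degrees δ₁, δ₂. Then ESO(G₁+G₂) ≥ 2√2·m₁·(δ₁+n₂)² + 2√2·m₂·(δ₂+n₁)² + n₁n₂·(δ₁+n₂+δ₂+n₁)·√((δ₁+n₂)² + (δ₂+n₁)²). -/
open Finset SimpleGraph
open scoped Classical

noncomputable def ESO {V : Type*} [Fintype V] (G : SimpleGraph V) : Real :=
  Finset.sum G.edgeSet.toFinset fun e =>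
    Sym2.lift ⟨fun u v => ((G.degree u : Real) + (G.degree v : Real)) *
        Real.sqrt ((G.degree u : Real) ^ 2 + (G.degree v : Real) ^ 2),
      fun u v => by
        dsimp only; rw [add_comm (G.degree u : Real), add_comm ((G.degree u : Real) ^ 2)]⟩ e

noncomputable def EU {V : Type*} [Fintype V] (G : SimpleGraph V) : Real :=
  Finset.sum G.edgeSet.toFinset fun e =>
    Sym2.lift ⟨fun u v => Real.sqrt ((G.degree u : Real) ^ 2 + (G.degree v : Real) ^ 2 +
        (G.degree u : Real) * (G.degree v : Real)),
      fun u v => by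
        dsimp only; rw [mul_comm (G.degree u : Real), add_comm ((G.degree u : Real) ^ 2)]⟩ e

noncomputable def edgeCount {V : Type*} [Fintype V] (G : SimpleGraph V) : Nat :=
  G.edgeSet.toFinset.card

def graphJoin {V1 V2 : Type*} (G1 : SimpleGraph V1) (G2 : SimpleGraph V2) :
    SimpleGraph (V1 ⊕ V2) where
  Adj x y :=
    match x, y with
    | Sum.inl a, Sum.inl b => G1.Adj a b
    | Sum.inr a, Sum.inr b => G2.Adj a b
    | Sum.inl _, Sum.inr _ => True
    | Sum.inr _, Sum.inl _ => True
  symm := by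
    constructor
    rintro (a | a) (b | b) h
    · exact G1.adj_symm h
    · trivial
    · trivial
    · exact G2.adj_symm h
  loopless := by
    constructor
    rintro (a | a) h
    · exact G1.irrefl h
    · exact G2.irrefl h

lemma key_ineq {c1 c2 x y : ℝ} (h1 : 0 ≤ c1) (h2 : 0 ≤ c2) (hx : c1 ≤ x) (hy : c2 ≤ y) :
    (c1 + c2) * Real.sqrt (c1 ^ 2 + c2 ^ 2) ≤ (x + y) * Real.sqrt (x ^ 2 + y ^ 2) := by
  apply mul_le_mul (add_le_add hx hy)
  · exact Real.sqrt_le_sqrt (add_le_add (pow_le_pow_left₀ h1 hx 2) (pow_le_pow_left₀ h2 hy 2))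
  · exact Real.sqrt_nonneg _
  · linarith

lemma two_sqrt_eq {c : ℝ} (hc : 0 ≤ c) :
    2 * Real.sqrt 2 * c ^ 2 = (c + c) * Real.sqrt (c ^ 2 + c ^ 2) := by
  have : c ^ 2 + c ^ 2 = 2 * c ^ 2 := by ring
  rw [this, Real.sqrt_mul (by norm_num), Real.sqrt_sq hc]
  ring

section
variable {V1 V2 : Type*} [Fintype V1] [Fintype V2] (G1 : SimpleGraph V1) (G2 : SimpleGraph V2)

lemma join_adj_ll (a b : V1) : (graphJoin G1 G2).Adj (Sum.inl a) (Sum.inl b) ↔ G1.Adj a b := Iff.rfl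
lemma join_adj_rr (a b : V2) : (graphJoin G1 G2).Adj (Sum.inr a) (Sum.inr b) ↔ G2.Adj a b := Iff.rfl
lemma join_adj_lr (a : V1) (b : V2) : (graphJoin G1 G2).Adj (Sum.inl a) (Sum.inr b) := trivial

lemma degree_join_inl (a : V1) :
    (graphJoin G1 G2).degree (Sum.inl a) = G1.degree a + Fintype.card V2 := by
  have h : (graphJoin G1 G2).neighborFinset (Sum.inl a) = (G1.neighborFinset a).disjSum univ := by
    ext x
    cases x <;> simp [SimpleGraph.mem_neighborFinset, join_adj_ll, join_adj_lr]
  unfold SimpleGraph.degree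
  rw [h, Finset.card_disjSum, Finset.card_univ]

lemma degree_join_inr (b : V2) :
    (graphJoin G1 G2).degree (Sum.inr b) = G2.degree b + Fintype.card V1 := by
  have h : (graphJoin G1 G2).neighborFinset (Sum.inr b) = (univ : Finset V1).disjSum (G2.neighborFinset b) := by
    ext x
    cases x <;> simp [SimpleGraph.mem_neighborFinset, join_adj_rr]
    · exact trivial
  unfold SimpleGraph.degree
  rw [h, Finset.card_disjSum, Finset.card_univ, Nat.add_comm]

omit [Fintype V1] [Fintype V2] in
lemma auxAB (e1 : Sym2 V1) (e2 : Sym2 V2) :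
    Sym2.map (Sum.inl : V1 → V1 ⊕ V2) e1 ≠ Sym2.map Sum.inr e2 := by
  induction e1 using Sym2.ind with | _ u v =>
  induction e2 using Sym2.ind with | _ p q =>
  simp [Sym2.map_pair_eq, Sym2.eq_iff]

omit [Fintype V1] [Fintype V2] in
lemma auxAC (e1 : Sym2 V1) (a : V1) (b : V2) :
    Sym2.map (Sum.inl : V1 → V1 ⊕ V2) e1 ≠ s(Sum.inl a, Sum.inr b) := by
  induction e1 using Sym2.ind with | _ u v =>
  simp [Sym2.map_pair_eq, Sym2.eq_iff]

omit [Fintype V1] [Fintype V2] in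
lemma auxBC (e2 : Sym2 V2) (a : V1) (b : V2) :
    Sym2.map (Sum.inr : V2 → V1 ⊕ V2) e2 ≠ s(Sum.inl a, Sum.inr b) := by
  induction e2 using Sym2.ind with | _ u v =>
  simp [Sym2.map_pair_eq, Sym2.eq_iff]

end

theorem eso_join_lower {V1 V2 : Type*} [Fintype V1] [Fintype V2]
    (G1 : SimpleGraph V1) (G2 : SimpleGraph V2) :
    2 * Real.sqrt 2 * (edgeCount G1 : Real) * ((G1.minDegree : Real) + Fintype.card V2) ^ 2 +
      2 * Real.sqrt 2 * (edgeCount G2 : Real) * ((G2.minDegree : Real) + Fintype.card V1) ^ 2 +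
      (Fintype.card V1 : Real) * (Fintype.card V2 : Real) *
        ((G1.minDegree : Real) + Fintype.card V2 + (G2.minDegree : Real) + Fintype.card V1) *
        Real.sqrt (((G1.minDegree : Real) + Fintype.card V2) ^ 2 +
          ((G2.minDegree : Real) + Fintype.card V1) ^ 2) ≤ ESO (graphJoin G1 G2) := by
  classical
  set J := graphJoin G1 G2 with hJdef
  set c1 : ℝ := (G1.minDegree : ℝ) + Fintype.card V2 with hc1def
  set c2 : ℝ := (G2.minDegree : ℝ) + Fintype.card V1 with hc2def
  have hc1 : 0 ≤ c1 := by positivity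
  have hc2 : 0 ≤ c2 := by positivity
  set f : Sym2 (V1 ⊕ V2) → ℝ := fun e =>
    Sym2.lift ⟨fun u v => ((J.degree u : Real) + (J.degree v : Real)) *
        Real.sqrt ((J.degree u : Real) ^ 2 + (J.degree v : Real) ^ 2),
      fun u v => by
        dsimp only; rw [add_comm (J.degree u : Real), add_comm ((J.degree u : Real) ^ 2)]⟩ e
    with hfdef
  have hfval : ∀ x y : V1 ⊕ V2, f s(x, y) =
      ((J.degree x : Real) + (J.degree y : Real)) *
        Real.sqrt ((J.degree x : Real) ^ 2 + (J.degree y : Real) ^ 2) := by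
    intro x y; rw [hfdef]; exact Sym2.lift_mk _ x y
  have hESO : ESO J = ∑ e ∈ J.edgeSet.toFinset, f e := rfl
  have hd1 : ∀ a : V1, c1 ≤ (J.degree (Sum.inl a) : ℝ) := by
    intro a
    rw [degree_join_inl]
    push_cast
    exact add_le_add_left (by exact_mod_cast G1.minDegree_le_degree a) _
  have hd2 : ∀ b : V2, c2 ≤ (J.degree (Sum.inr b) : ℝ) := by
    intro b
    rw [degree_join_inr]
    push_cast
    exact add_le_add_left (by exact_mod_cast G2.minDegree_le_degree b) _
  set eA : Sym2 V1 ↪ Sym2 (V1 ⊕ V2) := ⟨Sym2.map Sum.inl, Sym2.map.injective Sum.inl_injective⟩ with heA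
  set eB : Sym2 V2 ↪ Sym2 (V1 ⊕ V2) := ⟨Sym2.map Sum.inr, Sym2.map.injective Sum.inr_injective⟩ with heB
  have eCinj : Function.Injective (fun p : V1 × V2 => s(Sum.inl p.1, (Sum.inr p.2 : V1 ⊕ V2))) := by
    intro p q h
    simp only [Sym2.eq_iff] at h
    rcases h with ⟨h1, h2⟩ | ⟨h1, h2⟩
    · exact Prod.ext (Sum.inl_injective h1) (Sum.inr_injective h2)
    · exact absurd h1 (by simp)
  set eC : V1 × V2 ↪ Sym2 (V1 ⊕ V2) := ⟨fun p => s(Sum.inl p.1, Sum.inr p.2), eCinj⟩ with heC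
  set A := G1.edgeSet.toFinset.map eA with hA
  set B := G2.edgeSet.toFinset.map eB with hB
  set C := (univ : Finset (V1 × V2)).map eC with hC
  have hAB : Disjoint A B := by
    rw [Finset.disjoint_left]
    rintro e he1 he2
    obtain ⟨e1, -, rfl⟩ := Finset.mem_map.1 he1
    obtain ⟨e2, -, h⟩ := Finset.mem_map.1 he2
    exact auxAB e1 e2 h.symm
  have hABC : Disjoint (A ∪ B) C := by
    rw [Finset.disjoint_left]
    rintro e he1 he2
    obtain ⟨p, -, rfl⟩ := Finset.mem_map.1 he2
    rcases Finset.mem_union.1 he1 with h | h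
    · obtain ⟨e1, -, h⟩ := Finset.mem_map.1 h
      exact auxAC e1 p.1 p.2 h
    · obtain ⟨e2, -, h⟩ := Finset.mem_map.1 h
      exact auxBC e2 p.1 p.2 h
  have hsub : A ∪ B ∪ C ⊆ J.edgeSet.toFinset := by
    intro e he
    rw [Set.mem_toFinset]
    rcases Finset.mem_union.1 he with h | h
    · rcases Finset.mem_union.1 h with h | h
      · obtain ⟨e1, h1, rfl⟩ := Finset.mem_map.1 h
        rw [Set.mem_toFinset] at h1
        induction e1 using Sym2.ind with | _ u v =>
        rw [SimpleGraph.mem_edgeSet] at h1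
        show Sym2.map Sum.inl s(u, v) ∈ J.edgeSet
        rw [Sym2.map_pair_eq, SimpleGraph.mem_edgeSet]
        exact h1
      · obtain ⟨e2, h2, rfl⟩ := Finset.mem_map.1 h
        rw [Set.mem_toFinset] at h2
        induction e2 using Sym2.ind with | _ u v =>
        rw [SimpleGraph.mem_edgeSet] at h2
        show Sym2.map Sum.inr s(u, v) ∈ J.edgeSet
        rw [Sym2.map_pair_eq, SimpleGraph.mem_edgeSet]
        exact h2
    · obtain ⟨p, -, rfl⟩ := Finset.mem_map.1 h
      show s(Sum.inl p.1, (Sum.inr p.2 : V1 ⊕ V2)) ∈ J.edgeSet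
      rw [SimpleGraph.mem_edgeSet]
      exact join_adj_lr G1 G2 p.1 p.2
  have hf0 : ∀ e : Sym2 (V1 ⊕ V2), 0 ≤ f e := by
    intro e
    induction e using Sym2.ind with | _ x y =>
    rw [hfval]
    positivity
  have step1 : ∑ e ∈ A ∪ B ∪ C, f e ≤ ESO J := by
    rw [hESO]
    exact Finset.sum_le_sum_of_subset_of_nonneg hsub (fun e _ _ => hf0 e)
  rw [Finset.sum_union hABC, Finset.sum_union hAB] at step1
  have boundA : (edgeCount G1 : ℝ) * (2 * Real.sqrt 2 * c1 ^ 2) ≤ ∑ e ∈ A, f e := by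
    rw [hA, Finset.sum_map]
    have hterm : ∀ e ∈ G1.edgeSet.toFinset, 2 * Real.sqrt 2 * c1 ^ 2 ≤ f (eA e) := by
      intro e _
      induction e using Sym2.ind with | _ u v =>
      have : eA s(u, v) = s(Sum.inl u, (Sum.inl v : V1 ⊕ V2)) := Sym2.map_pair_eq _ _ _
      rw [this, hfval, two_sqrt_eq hc1]
      exact key_ineq hc1 hc1 (hd1 u) (hd1 v)
    calc (edgeCount G1 : ℝ) * (2 * Real.sqrt 2 * c1 ^ 2)
        = ∑ _e ∈ G1.edgeSet.toFinset, 2 * Real.sqrt 2 * c1 ^ 2 := by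
          rw [Finset.sum_const, nsmul_eq_mul]; rfl
      _ ≤ _ := Finset.sum_le_sum hterm
  have boundB : (edgeCount G2 : ℝ) * (2 * Real.sqrt 2 * c2 ^ 2) ≤ ∑ e ∈ B, f e := by
    rw [hB, Finset.sum_map]
    have hterm : ∀ e ∈ G2.edgeSet.toFinset, 2 * Real.sqrt 2 * c2 ^ 2 ≤ f (eB e) := by
      intro e _
      induction e using Sym2.ind with | _ u v =>
      have : eB s(u, v) = s(Sum.inr u, (Sum.inr v : V1 ⊕ V2)) := Sym2.map_pair_eq _ _ _
      rw [this, hfval, two_sqrt_eq hc2]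
      exact key_ineq hc2 hc2 (hd2 u) (hd2 v)
    calc (edgeCount G2 : ℝ) * (2 * Real.sqrt 2 * c2 ^ 2)
        = ∑ _e ∈ G2.edgeSet.toFinset, 2 * Real.sqrt 2 * c2 ^ 2 := by
          rw [Finset.sum_const, nsmul_eq_mul]; rfl
      _ ≤ _ := Finset.sum_le_sum hterm
  have boundC : (Fintype.card V1 : ℝ) * (Fintype.card V2 : ℝ) *
      ((c1 + c2) * Real.sqrt (c1 ^ 2 + c2 ^ 2)) ≤ ∑ e ∈ C, f e := by
    rw [hC, Finset.sum_map]
    have hterm : ∀ p ∈ (univ : Finset (V1 × V2)),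
        (c1 + c2) * Real.sqrt (c1 ^ 2 + c2 ^ 2) ≤ f (eC p) := by
      intro p _
      have : eC p = s(Sum.inl p.1, (Sum.inr p.2 : V1 ⊕ V2)) := rfl
      rw [this, hfval]
      exact key_ineq hc1 hc2 (hd1 p.1) (hd2 p.2)
    calc (Fintype.card V1 : ℝ) * (Fintype.card V2 : ℝ) *
          ((c1 + c2) * Real.sqrt (c1 ^ 2 + c2 ^ 2))
        = ∑ _p ∈ (univ : Finset (V1 × V2)), (c1 + c2) * Real.sqrt (c1 ^ 2 + c2 ^ 2) := by
          rw [Finset.sum_const, nsmul_eq_mul, Finset.card_univ, Fintype.card_prod]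
          push_cast; ring
      _ ≤ _ := Finset.sum_le_sum hterm
  calc 2 * Real.sqrt 2 * (edgeCount G1 : ℝ) * c1 ^ 2 +
        2 * Real.sqrt 2 * (edgeCount G2 : ℝ) * c2 ^ 2 +
        (Fintype.card V1 : ℝ) * (Fintype.card V2 : ℝ) *
          (c1 + (G2.minDegree : ℝ) + Fintype.card V1) *
          Real.sqrt (c1 ^ 2 + c2 ^ 2)
      = (edgeCount G1 : ℝ) * (2 * Real.sqrt 2 * c1 ^ 2) +
        (edgeCount G2 : ℝ) * (2 * Real.sqrt 2 * c2 ^ 2) +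
        (Fintype.card V1 : ℝ) * (Fintype.card V2 : ℝ) *
          ((c1 + c2) * Real.sqrt (c1 ^ 2 + c2 ^ 2)) := by rw [hc2def]; ring
    _ ≤ ∑ e ∈ A, f e + ∑ e ∈ B, f e + ∑ e ∈ C, f e := by
        exact add_le_add (add_le_add boundA boundB) boundC
    _ ≤ ESO J := step1
end

section
/- If G₁ is r₁-regular with n₁ vertices and m₁ edges and G₂ is r₂-regular with n₂ vertices and m₂ edges, then EU(G₁ ∘ G₂) = √3·m₁·(r₁+n₂) + √3·n₁·m₂·(r₂+1) + n₁n₂·√((r₁+n₂)² + (r₂+1)² + (r₁+n₂)(r₂+1)). -/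
open Finset SimpleGraph
open scoped Classical

def corona {V1 V2 : Type*} (G1 : SimpleGraph V1) (G2 : SimpleGraph V2) :
    SimpleGraph (V1 ⊕ V1 × V2) where
  Adj x y :=
    match x, y with
    | Sum.inl a, Sum.inl b => G1.Adj a b
    | Sum.inr p, Sum.inr q => p.1 = q.1 ∧ G2.Adj p.2 q.2
    | Sum.inl a, Sum.inr p => a = p.1
    | Sum.inr p, Sum.inl a => a = p.1
  symm := by
    constructor
    rintro (a | p) (b | q) h
    · exact G1.adj_symm h
    · exact h
    · exact h
    · exact ⟨h.1.symm, G2.adj_symm h.2⟩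
  loopless := by
    constructor
    rintro (a | p) h
    · exact G1.irrefl h
    · exact G2.irrefl h.2


section CoronaAux

set_option linter.unusedSectionVars false

variable {V1 V2 : Type*} [Fintype V1] [Fintype V2]
  (G1 : SimpleGraph V1) (G2 : SimpleGraph V2)

lemma degree_inl (a : V1) :
    (corona G1 G2).degree (Sum.inl a) = G1.degree a + Fintype.card V2 := by
  rw [← card_neighborSet_eq_degree, ← card_neighborSet_eq_degree]
  have e : (corona G1 G2).neighborSet (Sum.inl a) ≃
      (G1.neighborSet a) ⊕ {p : V1 × V2 // a = p.1} :=
    Equiv.subtypeSum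
  rw [Fintype.card_congr e, Fintype.card_sum]
  congr 1
  refine Fintype.card_congr ⟨fun x => x.1.2, fun v => ⟨(a, v), rfl⟩, ?_, fun v => rfl⟩
  rintro ⟨⟨x, y⟩, h⟩
  cases h
  rfl

lemma degree_inr (p : V1 × V2) :
    (corona G1 G2).degree (Sum.inr p) = G2.degree p.2 + 1 := by
  rw [← card_neighborSet_eq_degree]
  have e : (corona G1 G2).neighborSet (Sum.inr p) ≃
      {b : V1 // b = p.1} ⊕ {q : V1 × V2 // p.1 = q.1 ∧ G2.Adj p.2 q.2} :=
    Equiv.subtypeSum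
  rw [Fintype.card_congr e, Fintype.card_sum]
  rw [add_comm]
  have hcard1 : Fintype.card {b : V1 // b = p.1} = 1 := by
    simp [Fintype.card_eq_one_iff]
  rw [hcard1]
  congr 1
  rw [← card_neighborSet_eq_degree]
  refine Fintype.card_congr ⟨fun x => ⟨x.1.2, x.2.2⟩, fun w => ⟨(p.1, w.1), rfl, w.2⟩, ?_, fun w => rfl⟩
  rintro ⟨⟨x, y⟩, h, h2⟩
  cases h
  rfl

noncomputable def EdgeA : Finset (Sym2 (V1 ⊕ V1 × V2)) :=
  G1.edgeSet.toFinset.image (Sym2.map Sum.inl)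

noncomputable def EdgeB : Finset (Sym2 (V1 ⊕ V1 × V2)) :=
  ((Finset.univ : Finset V1) ×ˢ G2.edgeSet.toFinset).image
    (fun x => Sym2.map (fun v => Sum.inr (x.1, v)) x.2)

noncomputable def EdgeC (V1 V2 : Type*) [Fintype V1] [Fintype V2] :
    Finset (Sym2 (V1 ⊕ V1 × V2)) :=
  (Finset.univ : Finset (V1 × V2)).image (fun p => s(Sum.inl p.1, Sum.inr p))

lemma mem_EdgeA (e : Sym2 (V1 ⊕ V1 × V2)) :
    e ∈ EdgeA G1 ↔ ∃ u v, G1.Adj u v ∧ e = s(Sum.inl u, Sum.inl v) := by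
  simp only [EdgeA, Finset.mem_image, Set.mem_toFinset]
  constructor
  · rintro ⟨e', he', rfl⟩
    induction e' using Sym2.ind with
    | _ u v => exact ⟨u, v, he', rfl⟩
  · rintro ⟨u, v, huv, rfl⟩
    exact ⟨s(u, v), huv, rfl⟩

lemma mem_EdgeB (e : Sym2 (V1 ⊕ V1 × V2)) :
    e ∈ EdgeB G2 ↔ ∃ a u v, G2.Adj u v ∧ e = s(Sum.inr (a, u), Sum.inr (a, v)) := by
  simp only [EdgeB, Finset.mem_image, Finset.mem_product, Finset.mem_univ, true_and,
    Set.mem_toFinset, Prod.exists]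
  constructor
  · rintro ⟨a, e', he', rfl⟩
    induction e' using Sym2.ind with
    | _ u v => exact ⟨a, u, v, he', rfl⟩
  · rintro ⟨a, u, v, huv, rfl⟩
    exact ⟨a, s(u, v), huv, rfl⟩

lemma mem_EdgeC (e : Sym2 (V1 ⊕ V1 × V2)) :
    e ∈ EdgeC V1 V2 ↔ ∃ p : V1 × V2, e = s(Sum.inl p.1, Sum.inr p) := by
  simp only [EdgeC, Finset.mem_image, Finset.mem_univ, true_and]
  constructor
  · rintro ⟨p, rfl⟩; exact ⟨p, rfl⟩
  · rintro ⟨p, rfl⟩; exact ⟨p, rfl⟩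

lemma edge_decomp :
    (corona G1 G2).edgeSet.toFinset = EdgeA G1 ∪ EdgeB G2 ∪ EdgeC V1 V2 := by
  ext e
  induction e using Sym2.ind with
  | _ x y =>
    simp only [Set.mem_toFinset, mem_edgeSet, Finset.mem_union, mem_EdgeA, mem_EdgeB, mem_EdgeC]
    rcases x with a | p <;> rcases y with b | q <;>
      simp [corona, Sym2.eq_iff, Prod.ext_iff]
    · constructor
      · exact fun h => ⟨a, b, h, Or.inl ⟨rfl, rfl⟩⟩
      · rintro ⟨u, v, h, (⟨rfl, rfl⟩ | ⟨rfl, rfl⟩)⟩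
        exacts [h, h.symm]
    · exact eq_comm
    · constructor
      · rintro ⟨h, hadj⟩
        exact ⟨p.1, p.2, q.2, hadj, Or.inl ⟨⟨rfl, rfl⟩, h.symm, rfl⟩⟩
      · rintro ⟨a, u, v, hadj, (⟨⟨rfl, rfl⟩, h1, rfl⟩ | ⟨⟨rfl, rfl⟩, h1, rfl⟩)⟩
        exacts [⟨h1.symm, hadj⟩, ⟨h1.symm, hadj.symm⟩]

lemma disjoint_AB : Disjoint (EdgeA G1) (EdgeB G2) := by
  rw [Finset.disjoint_left]
  intro e hA hB
  rw [mem_EdgeA] at hA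
  rw [mem_EdgeB] at hB
  obtain ⟨u, v, -, rfl⟩ := hA
  obtain ⟨a, u', v', -, h⟩ := hB
  simp [Sym2.eq_iff] at h

lemma disjoint_ABC : Disjoint (EdgeA G1 ∪ EdgeB G2) (EdgeC V1 V2) := by
  rw [Finset.disjoint_left]
  intro e hA hC
  rw [Finset.mem_union, mem_EdgeA, mem_EdgeB] at hA
  rw [mem_EdgeC] at hC
  obtain ⟨p, rfl⟩ := hC
  rcases hA with ⟨u, v, -, h⟩ | ⟨a, u, v, -, h⟩ <;> simp [Sym2.eq_iff] at h

lemma sum_EdgeA (F : Sym2 (V1 ⊕ V1 × V2) → ℝ) (c : ℝ)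
    (hF : ∀ u v, G1.Adj u v → F s(Sum.inl u, Sum.inl v) = c) :
    ∑ e ∈ EdgeA G1, F e = (G1.edgeSet.toFinset.card : ℝ) * c := by
  rw [EdgeA, Finset.sum_image (fun x _ y _ h => Sym2.map.injective Sum.inl_injective h)]
  have hval : ∀ e ∈ G1.edgeSet.toFinset, F (Sym2.map Sum.inl e) = c := by
    intro e he
    induction e using Sym2.ind with
    | _ u v =>
      rw [Sym2.map_pair_eq]
      exact hF u v (by simpa using he)
  rw [Finset.sum_congr rfl hval, Finset.sum_const, nsmul_eq_mul]

lemma sum_EdgeB (F : Sym2 (V1 ⊕ V1 × V2) → ℝ) (c : ℝ)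
    (hF : ∀ a u v, G2.Adj u v → F s(Sum.inr (a, u), Sum.inr (a, v)) = c) :
    ∑ e ∈ EdgeB G2, F e = (Fintype.card V1 : ℝ) * (G2.edgeSet.toFinset.card : ℝ) * c := by
  have hinj : ∀ x ∈ (Finset.univ : Finset V1) ×ˢ G2.edgeSet.toFinset,
      ∀ y ∈ (Finset.univ : Finset V1) ×ˢ G2.edgeSet.toFinset,
      (fun x => Sym2.map (fun v => (Sum.inr (x.1, v) : V1 ⊕ V1 × V2)) x.2) x =
        (fun x => Sym2.map (fun v => (Sum.inr (x.1, v) : V1 ⊕ V1 × V2)) x.2) y → x = y := by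
    rintro ⟨a, e⟩ - ⟨b, e'⟩ - h
    induction e using Sym2.ind with
    | _ u v =>
      induction e' using Sym2.ind with
      | _ u' v' =>
        simp only [Sym2.map_pair_eq, Sym2.eq_iff, Sum.inr.injEq, Prod.mk.injEq] at h
        rcases h with ⟨⟨rfl, rfl⟩, -, rfl⟩ | ⟨⟨rfl, rfl⟩, -, rfl⟩
        · rfl
        · simp [Sym2.eq_swap]
  rw [EdgeB, Finset.sum_image hinj]
  have hval : ∀ x ∈ (Finset.univ : Finset V1) ×ˢ G2.edgeSet.toFinset,
      F (Sym2.map (fun v => Sum.inr (x.1, v)) x.2) = c := by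
    rintro ⟨a, e⟩ he
    induction e using Sym2.ind with
    | _ u v =>
      rw [Sym2.map_pair_eq]
      exact hF a u v (by simpa using (Finset.mem_product.mp he).2)
  rw [Finset.sum_congr rfl hval, Finset.sum_const, nsmul_eq_mul,
    Finset.card_product, Finset.card_univ]
  push_cast
  ring

lemma sum_EdgeC (F : Sym2 (V1 ⊕ V1 × V2) → ℝ) (c : ℝ)
    (hF : ∀ p : V1 × V2, F s(Sum.inl p.1, Sum.inr p) = c) :
    ∑ e ∈ EdgeC V1 V2, F e = (Fintype.card V1 : ℝ) * (Fintype.card V2 : ℝ) * c := by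
  have hinj : ∀ x ∈ (Finset.univ : Finset (V1 × V2)), ∀ y ∈ (Finset.univ : Finset (V1 × V2)),
      s(Sum.inl x.1, Sum.inr x) = s(Sum.inl y.1, Sum.inr y) → x = y := by
    rintro p - q - h
    simp only [Sym2.eq_iff, Sum.inl.injEq, Sum.inr.injEq] at h
    rcases h with ⟨-, rfl⟩ | ⟨h, -⟩
    · rfl
    · exact absurd h (by simp)
  rw [EdgeC, Finset.sum_image hinj, Finset.sum_congr rfl (fun p _ => hF p),
    Finset.sum_const, nsmul_eq_mul, Finset.card_univ, Fintype.card_prod]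
  push_cast
  ring

lemma sqrt_three_eq (d : ℝ) (hd : 0 ≤ d) :
    Real.sqrt (d ^ 2 + d ^ 2 + d * d) = Real.sqrt 3 * d := by
  rw [show d ^ 2 + d ^ 2 + d * d = 3 * d ^ 2 by ring, Real.sqrt_mul (by norm_num),
    Real.sqrt_sq hd]


end CoronaAux

noncomputable def euFun {V : Type*} [Fintype V] (G : SimpleGraph V) : Sym2 V → ℝ :=
  fun e =>
    Sym2.lift ⟨fun u v => Real.sqrt ((G.degree u : Real) ^ 2 + (G.degree v : Real) ^ 2 +
        (G.degree u : Real) * (G.degree v : Real)),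
      fun u v => by
        dsimp only; rw [mul_comm (G.degree u : Real), add_comm ((G.degree u : Real) ^ 2)]⟩ e

lemma EU_eq {V : Type*} [Fintype V] (G : SimpleGraph V) :
    EU G = ∑ e ∈ G.edgeSet.toFinset, euFun G e := rfl

lemma euFun_mk {V : Type*} [Fintype V] (G : SimpleGraph V) (u v : V) :
    euFun G s(u, v) = Real.sqrt ((G.degree u : Real) ^ 2 + (G.degree v : Real) ^ 2 +
      (G.degree u : Real) * (G.degree v : Real)) := by
  simp [euFun]

theorem eu_corona_regular {V1 V2 : Type*} [Fintype V1] [Fintype V2]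
    (G1 : SimpleGraph V1) (G2 : SimpleGraph V2) (r1 r2 : Nat)
    (h1 : G1.IsRegularOfDegree r1) (h2 : G2.IsRegularOfDegree r2) :
    EU (corona G1 G2) =
      Real.sqrt 3 * (edgeCount G1 : Real) * ((r1 : Real) + Fintype.card V2) +
      Real.sqrt 3 * (Fintype.card V1 : Real) * (edgeCount G2 : Real) * ((r2 : Real) + 1) +
      (Fintype.card V1 : Real) * (Fintype.card V2 : Real) *
        Real.sqrt (((r1 : Real) + Fintype.card V2) ^ 2 + ((r2 : Real) + 1) ^ 2 +
          ((r1 : Real) + Fintype.card V2) * ((r2 : Real) + 1)) := by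
  classical
  have hdeg1 : ∀ a : V1, (((corona G1 G2).degree (Sum.inl a) : ℝ)) =
      (r1 : ℝ) + Fintype.card V2 := by
    intro a; rw [degree_inl, h1 a]; push_cast; ring
  have hdeg2 : ∀ p : V1 × V2, (((corona G1 G2).degree (Sum.inr p) : ℝ)) = (r2 : ℝ) + 1 := by
    intro p; rw [degree_inr, h2 p.2]; push_cast; ring
  have hA : ∀ u v, G1.Adj u v → euFun (corona G1 G2) s(Sum.inl u, Sum.inl v) =
      Real.sqrt 3 * ((r1 : ℝ) + Fintype.card V2) := by
    intro u v _
    rw [euFun_mk, hdeg1, hdeg1, sqrt_three_eq _ (by positivity)]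
  have hB : ∀ a u v, G2.Adj u v → euFun (corona G1 G2) s(Sum.inr (a, u), Sum.inr (a, v)) =
      Real.sqrt 3 * ((r2 : ℝ) + 1) := by
    intro a u v _
    rw [euFun_mk, hdeg2, hdeg2, sqrt_three_eq _ (by positivity)]
  have hC : ∀ p : V1 × V2, euFun (corona G1 G2) s(Sum.inl p.1, Sum.inr p) =
      Real.sqrt (((r1 : ℝ) + Fintype.card V2) ^ 2 + ((r2 : ℝ) + 1) ^ 2 +
        ((r1 : ℝ) + Fintype.card V2) * ((r2 : ℝ) + 1)) := by
    intro p
    rw [euFun_mk, hdeg1, hdeg2]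
  rw [EU_eq, edge_decomp, Finset.sum_union (disjoint_ABC G1 G2),
    Finset.sum_union (disjoint_AB G1 G2),
    sum_EdgeA G1 _ _ hA, sum_EdgeB G2 _ _ hB, sum_EdgeC _ _ hC]
  unfold edgeCount
  ring
end
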